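/- For every η > 0 there exist α ∈ (0, 1/2) and ε > 0 with the following property: any Borel probability measure μ on ℝ² with μ(K_α) = 1 satisfying (1+ε)^{−n} 4^{−n} ≤ μ(Q_w) ≤ (1+ε)^n 4^{−n} for every n ∈ ℕ and every word w ∈ (Fin 4)^n has the property that every Borel set A ⊆ ℝ² with μ(A) > 0 satisfies dimH A > 2 − η. -/

import Mathlib

/-- The four corner vectors `(±(1-α)/2, ±(1-α)/2)` of the 4-corner Cantor construction. -/
noncomputable def cornerV (α : ℝ) : Fin 4 → EuclideanSpace ℝ (Fin 2) := fun i =>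
  (WithLp.equiv 2 (Fin 2 → ℝ)).symm
    ![if (i : ℕ) % 2 = 0 then (1 - α) / 2 else -((1 - α) / 2),
      if (i : ℕ) < 2 then (1 - α) / 2 else -((1 - α) / 2)]

/-- The coding map `π(x) = ∑ αⁿ • v (x n)` of the 4-corner Cantor set. -/
noncomputable def cantorPi (α : ℝ) (x : ℕ → Fin 4) : EuclideanSpace ℝ (Fin 2) :=
  ∑' n : ℕ, α ^ n • cornerV α (x n)

/-- The cylinder piece `Q_w = π({x : x k = w k for all k < n})`. -/
noncomputable def cylPiece (α : ℝ) {n : ℕ} (w : Fin n → Fin 4) :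
    Set (EuclideanSpace ℝ (Fin 2)) :=
  cantorPi α '' {x : ℕ → Fin 4 | ∀ k : Fin n, x k = w k}

set_option linter.unreachableTactic false
set_option linter.unusedTactic false
set_option linter.unusedVariables false
set_option linter.deprecated false

lemma cornerV_abs {α : ℝ} (hα : α ≤ 1) (i : Fin 4) (j : Fin 2) :
    |cornerV α i j| = (1 - α) / 2 := by
  have h : (0:ℝ) ≤ (1 - α) / 2 := by linarith
  fin_cases j <;> simp [cornerV, WithLp.equiv_symm_apply] <;>
    split <;> simp [abs_of_nonneg h, abs_of_nonpos, neg_nonpos.mpr h]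

lemma cornerV_apply (α : ℝ) (i : Fin 4) (j : Fin 2) :
    cornerV α i j = ![if (i : ℕ) % 2 = 0 then (1 - α) / 2 else -((1 - α) / 2),
      if (i : ℕ) < 2 then (1 - α) / 2 else -((1 - α) / 2)] j := rfl

lemma cornerV_diff_le {α : ℝ} (hα : α ≤ 1) (i i' : Fin 4) (j : Fin 2) :
    |cornerV α i j - cornerV α i' j| ≤ 1 - α := by
  have h : (0:ℝ) ≤ (1 - α) / 2 := by linarith
  calc |cornerV α i j - cornerV α i' j| ≤ |cornerV α i j| + |cornerV α i' j| := abs_sub _ _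
    _ ≤ 1 - α := by
        fin_cases j <;> rw [cornerV_apply, cornerV_apply] <;> simp <;>
          split <;> split <;>
          simp [abs_of_nonneg h, abs_of_nonpos, neg_nonpos.mpr h] <;> linarith

lemma cornerV_diff {α : ℝ} (hα : α ≤ 1) {i i' : Fin 4} (h : i ≠ i') :
    ∃ j : Fin 2, |cornerV α i j - cornerV α i' j| = 1 - α := by
  have h1 : (0:ℝ) ≤ 1 - α := by linarith
  by_cases hm : (i : ℕ) % 2 = (i' : ℕ) % 2
  · have hlt : ((i : ℕ) < 2) ↔ ¬ ((i' : ℕ) < 2) := by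
      revert hm h; fin_cases i <;> fin_cases i' <;> decide
    refine ⟨1, ?_⟩
    rw [cornerV_apply, cornerV_apply]
    by_cases h2 : (i : ℕ) < 2
    · have h3 : ¬ ((i' : ℕ) < 2) := hlt.mp h2
      simp [h2, h3]; linarith
    · have h3 : ((i' : ℕ) < 2) := by by_contra h4; exact h2 (hlt.mpr h4)
      simp [h2, h3]; rw [abs_of_nonpos (by linarith)]; ring
  · refine ⟨0, ?_⟩
    rw [cornerV_apply, cornerV_apply]
    by_cases h2 : (i : ℕ) % 2 = 0
    · have h3 : ¬ ((i' : ℕ) % 2 = 0) := fun hh => hm (h2.trans hh.symm)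
      simp [h2, h3]; linarith
    · have h3 : (i' : ℕ) % 2 = 0 := by omega
      simp [h2, h3]; rw [abs_of_nonpos (by linarith)]; ring

lemma cornerV_norm_le {α : ℝ} (h0 : 0 ≤ α) (hα : α ≤ 1) (i : Fin 4) :
    ‖cornerV α i‖ ≤ 1 := by
  rw [EuclideanSpace.norm_eq]
  rw [show (1:ℝ) = Real.sqrt 1 by simp]
  apply Real.sqrt_le_sqrt
  have : ∀ j : Fin 2, ‖cornerV α i j‖ ^ 2 ≤ 1/2 := by
    intro j
    rw [Real.norm_eq_abs, cornerV_abs hα i j]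
    nlinarith
  calc ∑ j : Fin 2, ‖cornerV α i j‖ ^ 2 ≤ ∑ j : Fin 2, (1/2 : ℝ) :=
        Finset.sum_le_sum (fun j _ => this j)
    _ = 1 := by simp

lemma cantorPi_summable {α : ℝ} (h0 : 0 ≤ α) (hα : α < 1) (x : ℕ → Fin 4) :
    Summable (fun n : ℕ => α ^ n • cornerV α (x n)) := by
  apply Summable.of_norm_bounded (g := fun n => α ^ n) (summable_geometric_of_lt_one h0 hα)
  intro n
  rw [norm_smul, norm_pow, Real.norm_eq_abs, abs_of_nonneg h0]
  nlinarith [cornerV_norm_le h0 hα.le (x n), pow_nonneg h0 n, norm_nonneg (cornerV α (x n))]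

lemma cantorPi_continuous {α : ℝ} (h0 : 0 ≤ α) (hα : α < 1) :
    Continuous (cantorPi α) := by
  apply continuous_tsum
  · intro n
    exact ((continuous_const (y := α ^ n)).smul ((Continuous.comp (f := fun x : ℕ → Fin 4 => x n)
      (continuous_of_discreteTopology (f := cornerV α)) (continuous_apply n))))
  · exact summable_geometric_of_lt_one h0 hα
  · intro n x
    rw [norm_smul, norm_pow, Real.norm_eq_abs, abs_of_nonneg h0]
    nlinarith [cornerV_norm_le h0 hα.le (x n), pow_nonneg h0 n, norm_nonneg (cornerV α (x n))]

lemma cantorPi_apply {α : ℝ} (h0 : 0 ≤ α) (hα : α < 1) (x : ℕ → Fin 4) (j : Fin 2) :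
    cantorPi α x j = ∑' n : ℕ, α ^ n * cornerV α (x n) j := by
  have := (EuclideanSpace.proj (𝕜 := ℝ) j).map_tsum (cantorPi_summable h0 hα x)
  simpa [cantorPi] using this

lemma coord_summable {α : ℝ} (h0 : 0 ≤ α) (hα : α < 1) (x : ℕ → Fin 4) (j : Fin 2) :
    Summable (fun n : ℕ => α ^ n * cornerV α (x n) j) := by
  apply Summable.of_norm_bounded (g := fun n => α ^ n) (summable_geometric_of_lt_one h0 hα)
  intro n
  rw [Real.norm_eq_abs, abs_mul, abs_pow, abs_of_nonneg h0]
  have h1 := cornerV_abs hα.le (x n) j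
  nlinarith [pow_nonneg h0 n, abs_nonneg (cornerV α (x n) j)]

lemma cantorPi_sep {α : ℝ} (h0 : 0 < α) (hα : α < 1/2) {x y : ℕ → Fin 4} {k : ℕ}
    (hagree : ∀ m < k, x m = y m) (hne : x k ≠ y k) :
    (1 - 2*α) * α ^ k ≤ dist (cantorPi α x) (cantorPi α y) := by
  have hα1 : α < 1 := by linarith
  obtain ⟨j, hj⟩ := cornerV_diff hα1.le hne
  set h : ℕ → ℝ := fun n => α ^ n * (cornerV α (x n) j - cornerV α (y n) j) with hh
  have hsum : Summable h := by
    have := (coord_summable h0.le hα1 x j).sub (coord_summable h0.le hα1 y j)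
    simpa [hh, mul_sub] using this
  have hcoord : cantorPi α x j - cantorPi α y j = ∑' n, h n := by
    rw [cantorPi_apply h0.le hα1, cantorPi_apply h0.le hα1,
      ← Summable.tsum_sub (coord_summable h0.le hα1 x j) (coord_summable h0.le hα1 y j)]
    simp [hh, mul_sub]
  -- split the sum
  have hsplit := Summable.sum_add_tsum_nat_add (f := h) (k + 1) hsum
  have hzero : ∀ m < k, h m = 0 := fun m hm => by simp [hh, hagree m hm]
  have hsum_eq : ∑ n ∈ Finset.range (k+1), h n = h k := by
    rw [Finset.sum_range_succ]
    rw [Finset.sum_eq_zero (fun m hm => hzero m (Finset.mem_range.mp hm)), zero_add]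
  -- tail bound
  have htail : |∑' m : ℕ, h (m + (k+1))| ≤ α ^ (k+1) := by
    have hb : ∀ m : ℕ, |h (m + (k+1))| ≤ (1 - α) * α ^ (k+1) * α ^ m := by
      intro m
      rw [hh]
      simp only [abs_mul, abs_pow, abs_of_nonneg h0.le]
      have := cornerV_diff_le hα1.le (x (m+(k+1))) (y (m+(k+1))) j
      calc α ^ (m + (k+1)) * |cornerV α (x (m+(k+1))) j - cornerV α (y (m+(k+1))) j|
          ≤ α ^ (m + (k+1)) * (1 - α) := by
            exact mul_le_mul_of_nonneg_left this (pow_nonneg h0.le _)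
        _ = (1 - α) * α ^ (k+1) * α ^ m := by rw [pow_add]; ring
    have hgs : Summable (fun m : ℕ => (1 - α) * α ^ (k+1) * α ^ m) :=
      (summable_geometric_of_lt_one h0.le hα1).mul_left _
    have habs : Summable (fun m : ℕ => |h (m + (k+1))|) :=
      Summable.of_nonneg_of_le (fun m => abs_nonneg _) hb hgs
    calc |∑' m : ℕ, h (m + (k+1))| ≤ ∑' m : ℕ, |h (m + (k+1))| := by
          simpa [Real.norm_eq_abs] using norm_tsum_le_tsum_norm (f := fun m => h (m + (k+1)))
            (by simpa [Real.norm_eq_abs] using habs)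
      _ ≤ ∑' m : ℕ, (1 - α) * α ^ (k+1) * α ^ m := Summable.tsum_le_tsum hb habs hgs
      _ = α ^ (k+1) := by
          rw [tsum_mul_left, tsum_geometric_of_lt_one h0.le hα1]
          have h1 : (1:ℝ) - α ≠ 0 := by linarith
          field_simp
  -- main coordinate bound
  have hk : |h k| = α ^ k * (1 - α) := by
    rw [hh]; simp only [abs_mul, abs_pow, abs_of_nonneg h0.le, hj]
  have hmain : (1 - 2*α) * α ^ k ≤ |cantorPi α x j - cantorPi α y j| := by
    rw [hcoord, ← hsplit, hsum_eq]
    calc (1 - 2*α) * α ^ k = α ^ k * (1 - α) - α ^ (k+1) := by ring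
      _ ≤ |h k| - |∑' m : ℕ, h (m + (k+1))| := by rw [hk]; linarith
      _ ≤ |h k + ∑' m : ℕ, h (m + (k+1))| := by
          have := abs_add_le (h k + ∑' m : ℕ, h (m + (k+1))) (-(∑' m : ℕ, h (m + (k+1))))
          simp only [add_neg_cancel_right, abs_neg] at this
          linarith
  -- coordinate bound implies distance bound
  refine hmain.trans ?_
  rw [EuclideanSpace.dist_eq]
  have : |cantorPi α x j - cantorPi α y j| =
      Real.sqrt (dist (cantorPi α x j) (cantorPi α y j) ^ 2) := by
    rw [Real.dist_eq, Real.sqrt_sq_eq_abs, abs_abs]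
  rw [this]
  apply Real.sqrt_le_sqrt
  exact Finset.single_le_sum (f := fun i => dist (cantorPi α x i) (cantorPi α y i) ^ 2)
    (fun i _ => sq_nonneg _) (Finset.mem_univ j)

open MeasureTheory in
lemma measure_small_set {α : ℝ} (h0 : 0 < α) (hα : α < 1/2)
    (μ : Measure (EuclideanSpace ℝ (Fin 2))) [IsProbabilityMeasure μ]
    (hK : μ (Set.range (cantorPi α)) = 1) {ε : ℝ} (hε : 0 ≤ ε)
    (hcyl : ∀ (n : ℕ) (w : Fin n → Fin 4),
      μ (cylPiece α w) ≤ ENNReal.ofReal ((1 + ε) ^ n * ((4 : ℝ) ^ n)⁻¹))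
    (B : Set (EuclideanSpace ℝ (Fin 2))) (n : ℕ)
    (hB : EMetric.diam B < ENNReal.ofReal ((1 - 2*α) * α ^ n)) :
    μ B ≤ ENNReal.ofReal (((1 + ε)/4) ^ (n+1)) := by
  have hα1 : α < 1 := by linarith
  set K := Set.range (cantorPi α) with hKdef
  have hKcl : IsClosed K := (isCompact_range (cantorPi_continuous h0.le hα1)).isClosed
  have hKc : μ Kᶜ = 0 := by
    rw [measure_compl hKcl.measurableSet (measure_ne_top μ K), hK, measure_univ, tsub_self]
  have hBle : μ B ≤ μ (B ∩ K) := by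
    calc μ B ≤ μ (B ∩ K) + μ (B \ K) := measure_le_inter_add_diff μ B K
      _ ≤ μ (B ∩ K) + μ Kᶜ := by gcongr; exact fun b hb => hb.2
      _ = μ (B ∩ K) := by rw [hKc, add_zero]
  rcases Set.eq_empty_or_nonempty (B ∩ K) with hE | ⟨b0, hb0B, x0, hx0⟩
  · refine hBle.trans ?_
    rw [hE, measure_empty]
    exact zero_le
  · set w : Fin (n+1) → Fin 4 := fun k => x0 k with hw
    have hsub : B ∩ K ⊆ cylPiece α w := by
      rintro b ⟨hbB, y, rfl⟩
      have hdist : dist (cantorPi α x0) (cantorPi α y) < (1 - 2*α) * α ^ n := by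
        have h1 : edist (cantorPi α x0) (cantorPi α y) ≤ EMetric.diam B := by
          rw [hx0]
          exact EMetric.edist_le_diam_of_mem hb0B hbB
        have := lt_of_le_of_lt h1 hB
        rw [edist_dist] at this
        exact (ENNReal.ofReal_lt_ofReal_iff_of_nonneg dist_nonneg).mp this
      have hagree : ∀ k, k ≤ n → x0 k = y k := by
        by_contra hcon
        push_neg at hcon
        obtain ⟨k, hkn, hk⟩ := hcon
        have hex : ∃ m, x0 m ≠ y m := ⟨k, hk⟩
        set k0 := Nat.find hex with hk0
        have hk0le : k0 ≤ n := le_trans (Nat.find_le hk) hkn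
        have hsep := cantorPi_sep h0 hα
          (fun m hm => not_not.mp (Nat.find_min hex hm)) (Nat.find_spec hex)
        have hpow : α ^ n ≤ α ^ k0 := pow_le_pow_of_le_one h0.le hα1.le hk0le
        nlinarith [hsep, hdist]
      exact ⟨y, fun k => (hagree k (Nat.lt_succ_iff.mp k.isLt)).symm, rfl⟩
    calc μ B ≤ μ (B ∩ K) := hBle
      _ ≤ μ (cylPiece α w) := measure_mono hsub
      _ ≤ ENNReal.ofReal ((1 + ε) ^ (n+1) * ((4 : ℝ) ^ (n+1))⁻¹) := hcyl (n+1) w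
      _ = ENNReal.ofReal (((1 + ε)/4) ^ (n+1)) := by rw [div_pow]; ring_nf

open MeasureTheory in
theorem stmt7 (η : ℝ) (hη : 0 < η) :
    ∃ α ∈ Set.Ioo (0 : ℝ) (1 / 2), ∃ ε : ℝ, 0 < ε ∧
      ∀ μ : Measure (EuclideanSpace ℝ (Fin 2)), IsProbabilityMeasure μ →
        μ (Set.range (cantorPi α)) = 1 →
        (∀ (n : ℕ) (w : Fin n → Fin 4),
          ENNReal.ofReal (((1 + ε) ^ n)⁻¹ * ((4 : ℝ) ^ n)⁻¹) ≤ μ (cylPiece α w) ∧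
            μ (cylPiece α w) ≤ ENNReal.ofReal ((1 + ε) ^ n * ((4 : ℝ) ^ n)⁻¹)) →
        ∀ A : Set (EuclideanSpace ℝ (Fin 2)), MeasurableSet A → 0 < μ A →
          ENNReal.ofReal (2 - η) < dimH A := by
  -- choice of the dimension target dr
  set dr : ℝ := max (2 - η/2) 1 with hdr
  have hdr1 : 1 ≤ dr := le_max_right _ _
  have hdr0 : 0 < dr := lt_of_lt_of_le one_pos hdr1
  have hdr2 : dr < 2 := by
    rw [hdr, max_lt_iff]; constructor <;> linarith
  have hdrη : 2 - η < dr := by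
    rcases le_or_gt η 1 with h | h
    · have : 2 - η < 2 - η/2 := by linarith
      exact lt_of_lt_of_le this (le_max_left _ _)
    · linarith
  -- choice of α
  set a0 : ℝ := (1/4 : ℝ) ^ (dr⁻¹) with ha0
  have ha0pos : 0 < a0 := Real.rpow_pos_of_pos (by norm_num) _
  have ha0lt : a0 < 1/2 := by
    have h1 : ((1/4 : ℝ)) ^ ((2:ℝ)⁻¹) = 1/2 := by
      rw [show (1/4 : ℝ) = (1/2 : ℝ) ^ (2:ℝ) by
        rw [show (2:ℝ) = ((2:ℕ):ℝ) by norm_num, Real.rpow_natCast]; norm_num]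
      rw [← Real.rpow_mul (by norm_num), mul_inv_cancel₀ (by norm_num), Real.rpow_one]
    rw [← h1]
    apply Real.rpow_lt_rpow_of_exponent_gt (by norm_num) (by norm_num)
    exact inv_strictAnti₀ hdr0 hdr2
  set α : ℝ := (a0 + 1/2)/2 with hαdef
  have hα0 : 0 < α := by positivity
  have hαlt : α < 1/2 := by rw [hαdef]; linarith
  have hα1 : α < 1 := by linarith
  have ha0α : a0 < α := by rw [hαdef]; linarith
  have hαd : (1/4 : ℝ) < α ^ dr := by
    have h1 : a0 ^ dr = 1/4 := by
      rw [ha0, ← Real.rpow_mul (by norm_num), inv_mul_cancel₀ (ne_of_gt hdr0), Real.rpow_one]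
    rw [← h1]
    exact Real.rpow_lt_rpow ha0pos.le ha0α hdr0
  have hαd1 : α ^ dr < 1 := Real.rpow_lt_one hα0.le hα1 hdr0
  -- choice of ε
  refine ⟨α, ⟨hα0, hαlt⟩, 4 * α ^ dr - 1, by linarith, ?_⟩
  intro μ hμ hK hcyl A hA hApos
  set ε : ℝ := 4 * α ^ dr - 1 with hεdef
  have hε0 : 0 ≤ ε := by rw [hεdef]; linarith
  have hβ : (1 + ε)/4 = α ^ dr := by rw [hεdef]; ring
  have hcylU := fun n w => (hcyl n w).2
  -- the scaled measure
  set c : ENNReal := ENNReal.ofReal ((1 - 2*α) ^ dr) with hc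
  have h12α : 0 < 1 - 2*α := by linarith
  have hcpos : 0 < c := by
    rw [hc]; exact ENNReal.ofReal_pos.mpr (Real.rpow_pos_of_pos h12α _)
  have hcne : c ≠ ⊤ := ENNReal.ofReal_ne_top
  -- mass distribution principle
  have hmass : ∀ s : Set (EuclideanSpace ℝ (Fin 2)),
      EMetric.diam s ≤ ENNReal.ofReal ((1 - 2*α) * α) → (c • μ) s ≤ EMetric.diam s ^ dr := by
    intro s hs
    rcases eq_or_lt_of_le (zero_le (a := EMetric.diam s)) with hzero | hpos
    · -- diam = 0
      have hμs : μ s = 0 := by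
        have hle : ∀ n : ℕ, μ s ≤ ENNReal.ofReal (((1 + ε)/4) ^ (n+1)) := by
          intro n
          apply measure_small_set hα0 hαlt μ hK hε0 hcylU s n
          rw [← hzero]
          exact ENNReal.ofReal_pos.mpr (by positivity)
        have htend : Filter.Tendsto (fun n : ℕ => ENNReal.ofReal (((1 + ε)/4) ^ (n+1)))
            Filter.atTop (nhds 0) := by
          rw [show (0 : ENNReal) = ENNReal.ofReal 0 by simp]
          apply ENNReal.tendsto_ofReal
          have hb0 : 0 ≤ (1 + ε)/4 := by rw [hβ]; positivity
          have hb1 : (1 + ε)/4 < 1 := by rw [hβ]; exact hαd1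
          exact (tendsto_pow_atTop_nhds_zero_of_lt_one hb0 hb1).comp
            (Filter.tendsto_add_atTop_nat 1)
        exact le_antisymm (ge_of_tendsto' htend hle) zero_le
      simp [hμs]
    · -- diam > 0
      have hfin : EMetric.diam s ≠ ⊤ := by
        exact ne_top_of_le_ne_top ENNReal.ofReal_ne_top hs
      set d0 : ℝ := (EMetric.diam s).toReal with hd0
      have hd0pos : 0 < d0 := ENNReal.toReal_pos (ne_of_gt hpos) hfin
      have hd0le : d0 ≤ (1 - 2*α) * α := by
        rw [hd0]
        exact ENNReal.toReal_le_of_le_ofReal (by positivity) hs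
      have hfind : ∃ m : ℕ, (1 - 2*α) * α ^ m ≤ d0 := by
        obtain ⟨m, hm⟩ := exists_pow_lt_of_lt_one (div_pos hd0pos h12α) hα1
        exact ⟨m, by rw [mul_comm]; exact (le_div_iff₀ h12α).mp (le_of_lt (by
          rwa [div_eq_mul_inv, ← div_eq_mul_inv] at hm ⊢))⟩
      set N := Nat.find hfind with hN
      have hNspec : (1 - 2*α) * α ^ N ≤ d0 := Nat.find_spec hfind
      have hN1 : 1 ≤ N := by
        rcases Nat.eq_zero_or_pos N with h | h
        · exfalso
          rw [h, pow_zero, mul_one] at hNspec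
          nlinarith
        · exact h
      set n := N - 1 with hn
      have hNn : N = n + 1 := by omega
      have hnlt : d0 < (1 - 2*α) * α ^ n := by
        by_contra hcon
        push_neg at hcon
        have h5 : N ≤ n := Nat.find_le hcon
        omega
      -- apply the measure bound
      have hμs : μ s ≤ ENNReal.ofReal (((1 + ε)/4) ^ (n+1)) := by
        apply measure_small_set hα0 hαlt μ hK hε0 hcylU s n
        calc EMetric.diam s = ENNReal.ofReal d0 := (ENNReal.ofReal_toReal hfin).symm
          _ < ENNReal.ofReal ((1 - 2*α) * α ^ n) :=
            (ENNReal.ofReal_lt_ofReal_iff (by positivity)).mpr hnlt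
      -- convert to diameter bound
      have hβn : ((1 + ε)/4) ^ (n+1) = (α ^ (n+1)) ^ dr := by
        rw [hβ, ← Real.rpow_natCast (α ^ dr) (n+1), ← Real.rpow_natCast α (n+1),
          ← Real.rpow_mul hα0.le, ← Real.rpow_mul hα0.le, mul_comm]
      have hα_le : α ^ (n+1) ≤ d0 / (1 - 2*α) := by
        rw [le_div_iff₀ h12α]
        calc α ^ (n+1) * (1 - 2*α) = (1 - 2*α) * α ^ N := by rw [hNn]; ring
          _ ≤ d0 := hNspec
      have hfinal : ((1 + ε)/4) ^ (n+1) ≤ d0 ^ dr / (1 - 2*α) ^ dr := by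
        rw [hβn, ← Real.div_rpow hd0pos.le h12α.le]
        exact Real.rpow_le_rpow (by positivity) hα_le hdr0.le
      calc (c • μ) s = c * μ s := rfl
        _ ≤ c * ENNReal.ofReal (d0 ^ dr / (1 - 2*α) ^ dr) := by
            exact mul_le_mul_right (hμs.trans (ENNReal.ofReal_le_ofReal hfinal)) c
        _ = ENNReal.ofReal ((1 - 2*α) ^ dr * (d0 ^ dr / (1 - 2*α) ^ dr)) := by
            rw [hc, ← ENNReal.ofReal_mul (by positivity)]
        _ = ENNReal.ofReal (d0 ^ dr) := by
            congr 1
            field_simp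
        _ = (ENNReal.ofReal d0) ^ dr := by
            rw [← ENNReal.ofReal_rpow_of_pos hd0pos]
        _ = EMetric.diam s ^ dr := by rw [hd0, ENNReal.ofReal_toReal hfin]
  -- apply the mass distribution principle
  have hν : c • μ ≤ μH[dr] :=
    Measure.le_hausdorffMeasure dr (c • μ) (ENNReal.ofReal ((1 - 2*α) * α))
      (ENNReal.ofReal_pos.mpr (by positivity)) hmass
  have hHA : μH[dr] A ≠ 0 := by
    have h1 : (c • μ) A ≤ μH[dr] A := Measure.le_iff'.mp hν A
    have h2 : 0 < (c • μ) A := by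
      have : (c • μ) A = c * μ A := rfl
      rw [this]
      exact ENNReal.mul_pos (ne_of_gt hcpos) (ne_of_gt hApos)
    exact ne_of_gt (lt_of_lt_of_le h2 h1)
  have hdim : (dr.toNNReal : ENNReal) ≤ dimH A := by
    apply le_dimH_of_hausdorffMeasure_ne_zero
    rwa [Real.coe_toNNReal dr hdr0.le]
  refine lt_of_lt_of_le ?_ hdim
  have : (dr.toNNReal : ENNReal) = ENNReal.ofReal dr := rfl
  rw [this]
  exact (ENNReal.ofReal_lt_ofReal_iff hdr0).mpr hdrη
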